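/- Let ζ = exp(2πi/36). Then |ζ⁹ − ζ³ + ζ| = 2·cos(2π/9) · |ζ¹¹ − ζ⁷ + ζ⁵ − ζ³ + ζ|. -/

import Mathlib

/-- For `ζ = e^{2πi/36}`: `|ζ⁹ − ζ³ + ζ| = 2 cos(2π/9) · |ζ¹¹ − ζ⁷ + ζ⁵ − ζ³ + ζ|`. -/
theorem stmt11 (ζ : ℂ) (hζ : ζ = Complex.exp (2 * Real.pi * Complex.I / 36)) :
    ‖ζ^9 - ζ^3 + ζ‖ =
      2 * Real.cos (2 * Real.pi / 9) * ‖ζ^11 - ζ^7 + ζ^5 - ζ^3 + ζ‖ := by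
  have h6 : ζ ^ 6 = (1/2 : ℂ) + (Real.sqrt 3 : ℂ) / 2 * Complex.I := by
    rw [hζ, ← Complex.exp_nat_mul]
    rw [show ((6:ℕ):ℂ) * (2 * (Real.pi:ℂ) * Complex.I / 36)
        = ((Real.pi / 3 : ℝ) : ℂ) * Complex.I by push_cast; ring]
    rw [Complex.exp_mul_I, ← Complex.ofReal_cos, ← Complex.ofReal_sin,
      Real.cos_pi_div_three, Real.sin_pi_div_three]
    push_cast
    ring
  have hs : (Real.sqrt 3 : ℂ) * (Real.sqrt 3 : ℂ) = 3 := by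
    norm_cast
    exact Real.mul_self_sqrt (by norm_num)
  have hmin : ζ ^ 12 - ζ ^ 6 + 1 = 0 := by
    have h12 : ζ ^ 12 = (ζ ^ 6) ^ 2 := by ring
    rw [h12, h6]
    linear_combination (Complex.I ^ 2 / 4) * hs + (3/4 : ℂ) * Complex.I_sq
  have key : (ζ ^ 4 + ζ ^ 32) * (ζ ^ 11 - ζ ^ 7 + ζ ^ 5 - ζ ^ 3 + ζ)
      = ζ ^ 9 - ζ ^ 3 + ζ := by
    linear_combination (-ζ + ζ^3 + ζ^5 - 2*ζ^7 + ζ^9 - ζ^13 + ζ^15 - ζ^17 + ζ^19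
      - ζ^23 + 2*ζ^25 - ζ^27 + ζ^31) * hmin
  have h4 : ζ ^ 4 = Complex.exp (((2 * Real.pi / 9 : ℝ) : ℂ) * Complex.I) := by
    rw [hζ, ← Complex.exp_nat_mul]
    congr 1
    push_cast; ring
  have h32 : ζ ^ 32 = Complex.exp ((-(2 * Real.pi / 9 : ℝ) : ℂ) * Complex.I) := by
    rw [hζ, ← Complex.exp_nat_mul]
    rw [show ((32:ℕ):ℂ) * (2 * (Real.pi:ℂ) * Complex.I / 36)
        = (-(2 * Real.pi / 9 : ℝ) : ℂ) * Complex.I + 2 * (Real.pi:ℂ) * Complex.I by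
      push_cast; ring]
    rw [Complex.exp_add, Complex.exp_two_pi_mul_I, mul_one]
  have hsum : ζ ^ 4 + ζ ^ 32 = ((2 * Real.cos (2 * Real.pi / 9) : ℝ) : ℂ) := by
    rw [h4, h32]
    rw [show ((-(2 * Real.pi / 9 : ℝ)) : ℂ) * Complex.I
        = ((-(2 * Real.pi / 9) : ℝ) : ℂ) * Complex.I by push_cast; ring]
    rw [Complex.exp_mul_I, Complex.exp_mul_I, ← Complex.ofReal_cos,
      ← Complex.ofReal_sin, ← Complex.ofReal_cos, ← Complex.ofReal_sin,
      Real.cos_neg, Real.sin_neg]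
    push_cast
    ring
  have hcosnn : 0 ≤ 2 * Real.cos (2 * Real.pi / 9) := by
    have : 0 ≤ Real.cos (2 * Real.pi / 9) := by
      apply Real.cos_nonneg_of_mem_Icc
      constructor
      · nlinarith [Real.pi_pos]
      · nlinarith [Real.pi_pos]
    linarith
  calc ‖ζ^9 - ζ^3 + ζ‖
      = ‖(ζ ^ 4 + ζ ^ 32) * (ζ^11 - ζ^7 + ζ^5 - ζ^3 + ζ)‖ := by rw [key]
    _ = ‖ζ ^ 4 + ζ ^ 32‖ * ‖ζ^11 - ζ^7 + ζ^5 - ζ^3 + ζ‖ :=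
        norm_mul _ _
    _ = 2 * Real.cos (2 * Real.pi / 9) * ‖ζ^11 - ζ^7 + ζ^5 - ζ^3 + ζ‖ := by
        rw [hsum, Complex.norm_real, Real.norm_eq_abs, abs_of_nonneg hcosnn]
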